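/- arXiv:2410.22069 — 2 statements merged into one kernel-verified Lean document; each statement's English description precedes it below -/
import Mathlib

section
/- Let θ be a steepest-flow trajectory and t0 ≥ 0 with 𝓛(θ(t0)) < 1; assume θ(t) ≠ 0 and ∇𝓛(θ(t)) ≠ 0 for all t ≥ t0, and that s ↦ N(θ(s)) and s ↦ log γ̃(θ(s)) are differentiable on (t0, ∞). Then for all t2 > t1 ≥ t0 with ∫_{t1}^{t2} N(θ'(t))/N(θ(t)) dt > 0, there exists t* ∈ (t1, t2) such that 1/A(t*) − 1 ≤ (1/L) · log(γ̃(θ(t2))/γ̃(θ(t1))) / ∫_{t1}^{t2} N(θ'(t))/N(θ(t)) dt. -/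
open Filter

noncomputable section

abbrev E (p : ℕ) : Type := EuclideanSpace ℝ (Fin p)

/-- `N` is a norm on `ℝ^p`. -/
def IsNormOn {p : ℕ} (N : E p → ℝ) : Prop :=
  (∀ θ, 0 ≤ N θ) ∧ (∀ θ, N θ = 0 ↔ θ = 0) ∧
    (∀ (c : ℝ) (θ : E p), N (c • θ) = |c| * N θ) ∧
    ∀ θ θ' : E p, N (θ + θ') ≤ N θ + N θ'

/-- The dual norm `N_*(z) = sup {⟨z, v⟩ : N v ≤ 1}`. -/
def DualNorm {p : ℕ} (N : E p → ℝ) (z : E p) : ℝ :=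
  sSup ((fun v => (inner ℝ z v : ℝ)) '' {v | N v ≤ 1})

/-- The exponential loss `𝓛(θ) = Σ_i exp (-(y_i f(θ, x_i)))`. -/
def ExpLoss {p d m : ℕ} (f : E p → E d → ℝ) (x : Fin m → E d) (y : Fin m → ℝ)
    (θ : E p) : ℝ :=
  ∑ i, Real.exp (-(y i * f θ (x i)))

/-- A steepest-flow trajectory for the loss `𝓛` with respect to the norm `N`,
with derivative curve `θ'`. -/
def IsSteepestFlow {p : ℕ} (N : E p → ℝ) (𝓛 : E p → ℝ) (θ θ' : ℝ → E p) : Prop :=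
  ∀ t, (0:ℝ) ≤ t → HasDerivAt θ (θ' t) t ∧
    (inner ℝ (θ' t) (gradient 𝓛 (θ t)) : ℝ) = -(DualNorm N (gradient 𝓛 (θ t))) ^ 2 ∧
    N (θ' t) = DualNorm N (gradient 𝓛 (θ t))

/-- The soft margin `γ̃(θ) = -log 𝓛(θ) / N(θ)^L`. -/
def SoftMargin {p : ℕ} (N : E p → ℝ) (𝓛 : E p → ℝ) (L : ℝ) (θ : E p) : ℝ :=
  -Real.log (𝓛 θ) / N θ ^ L

/-- The hard margin `γ(θ) = (min_i y_i f(θ, x_i)) / N(θ)^L`. -/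
def HardMargin {p d m : ℕ} (N : E p → ℝ) (f : E p → E d → ℝ) (x : Fin m → E d)
    (y : Fin m → ℝ) (L : ℝ) (θ : E p) : ℝ :=
  (⨅ i, y i * f θ (x i)) / N θ ^ L

/-- The alignment `A(t) = ⟨θ(t)/N(θ(t)), -∇𝓛(θ(t))/N_*(∇𝓛(θ(t)))⟩`. -/
def FlowAlignment {p : ℕ} (N : E p → ℝ) (𝓛 : E p → ℝ) (θ : ℝ → E p) (t : ℝ) : ℝ :=
  inner ℝ ((N (θ t))⁻¹ • θ t) (-((DualNorm N (gradient 𝓛 (θ t)))⁻¹ • gradient 𝓛 (θ t)))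

lemma N_sum_le {p : ℕ} {N : E p → ℝ} (hN : IsNormOn N) {ι : Type*} (s : Finset ι)
    (g : ι → E p) : N (∑ i ∈ s, g i) ≤ ∑ i ∈ s, N (g i) := by
  classical
  induction s using Finset.induction with
  | empty => simp [(hN.2.1 0).mpr rfl]
  | insert _ _ h ih =>
      rw [Finset.sum_insert h, Finset.sum_insert h]
      exact le_trans (hN.2.2.2 _ _) (by linarith)

lemma coord_abs_le {p : ℕ} (z : E p) (i : Fin p) : |z i| ≤ ‖z‖ := by
  rw [EuclideanSpace.norm_eq]
  have h1 : |z i| = Real.sqrt (‖z i‖ ^ 2) := by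
    rw [Real.sqrt_sq_eq_abs]; simp
  rw [h1]
  apply Real.sqrt_le_sqrt
  exact Finset.single_le_sum (f := fun j => ‖z j‖ ^ 2) (fun j _ => by positivity) (Finset.mem_univ i)

lemma N_le_const_mul_norm {p : ℕ} {N : E p → ℝ} (hN : IsNormOn N) :
    ∃ C : ℝ, 0 ≤ C ∧ ∀ z : E p, N z ≤ C * ‖z‖ := by
  classical
  refine ⟨∑ i : Fin p, N (EuclideanSpace.single i (1:ℝ)), Finset.sum_nonneg fun i _ => hN.1 _, fun z => ?_⟩
  have hdec : z = ∑ i : Fin p, (z i) • EuclideanSpace.single i (1:ℝ) := by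
    apply PiLp.ext
    intro j
    rw [show ((∑ i : Fin p, z i • EuclideanSpace.single i (1:ℝ)) j) = ∑ i : Fin p, (z i • EuclideanSpace.single i (1:ℝ)) j from by rw [WithLp.ofLp_sum, Finset.sum_apply]]
    simp [EuclideanSpace.single_apply]
  calc N z = N (∑ i : Fin p, (z i) • EuclideanSpace.single i (1:ℝ)) := by rw [← hdec]
    _ ≤ ∑ i : Fin p, N ((z i) • EuclideanSpace.single i (1:ℝ)) := N_sum_le hN _ _
    _ ≤ ∑ i : Fin p, N (EuclideanSpace.single i (1:ℝ)) * ‖z‖ := by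
        apply Finset.sum_le_sum
        intro i _
        rw [hN.2.2.1]
        calc |z i| * N (EuclideanSpace.single i (1:ℝ))
            ≤ ‖z‖ * N (EuclideanSpace.single i (1:ℝ)) :=
              mul_le_mul_of_nonneg_right (coord_abs_le z i) (hN.1 _)
          _ = N (EuclideanSpace.single i (1:ℝ)) * ‖z‖ := mul_comm _ _
    _ = (∑ i : Fin p, N (EuclideanSpace.single i (1:ℝ))) * ‖z‖ := by rw [Finset.sum_mul]

lemma N_continuous {p : ℕ} {N : E p → ℝ} (hN : IsNormOn N) : Continuous N := by
  obtain ⟨C, hC0, hC⟩ := N_le_const_mul_norm hN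
  have key : ∀ a b : E p, N a - N b ≤ C * ‖a - b‖ := by
    intro a b
    have := hN.2.2.2 (a - b) b
    simp only [sub_add_cancel] at this
    have := hC (a - b)
    linarith
  rw [Metric.continuous_iff]
  intro b ε hε
  refine ⟨ε / (C + 1), by positivity, fun a hab => ?_⟩
  have h1 := key a b
  have h2 := key b a
  rw [← norm_neg, neg_sub] at h2
  rw [Real.dist_eq]
  rw [dist_eq_norm] at hab
  have hC1 : C * ‖a - b‖ ≤ (C+1) * ‖a-b‖ := by nlinarith [norm_nonneg (a-b)]
  have : (C+1) * ‖a - b‖ < (C+1) * (ε / (C+1)) := by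
    apply mul_lt_mul_of_pos_left hab (by linarith)
  rw [mul_div_cancel₀ _ (by linarith : C + 1 ≠ 0)] at this
  rw [abs_lt]; constructor <;> nlinarith

lemma norm_le_const_mul_N {p : ℕ} (hp : 0 < p) {N : E p → ℝ} (hN : IsNormOn N) :
    ∃ c : ℝ, 0 < c ∧ ∀ z : E p, c * ‖z‖ ≤ N z := by
  have hsph : (Metric.sphere (0 : E p) 1).Nonempty := by
    refine ⟨EuclideanSpace.single ⟨0, hp⟩ (1:ℝ), ?_⟩
    simp [EuclideanSpace.norm_single]
  obtain ⟨z₀, hz₀mem, hz₀min⟩ := (isCompact_sphere (0 : E p) 1).exists_isMinOn hsph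
    ((N_continuous hN).continuousOn)
  have hz₀norm : ‖z₀‖ = 1 := by simpa using hz₀mem
  have hz₀ne : z₀ ≠ 0 := by intro h; rw [h] at hz₀norm; simp at hz₀norm
  have hc : 0 < N z₀ := lt_of_le_of_ne (hN.1 z₀) (fun h => hz₀ne ((hN.2.1 z₀).mp h.symm))
  refine ⟨N z₀, hc, fun z => ?_⟩
  rcases eq_or_ne z 0 with rfl | hz
  · simp [(hN.2.1 0).mpr rfl]
  · have hzn : (0:ℝ) < ‖z‖ := norm_pos_iff.mpr hz
    have hmem : (‖z‖⁻¹ • z) ∈ Metric.sphere (0 : E p) 1 := by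
      simp [norm_smul, abs_of_pos (inv_pos.mpr hzn), inv_mul_cancel₀ (ne_of_gt hzn)]
    have := hz₀min hmem
    simp only [IsMinOn, Set.mem_setOf_eq] at this
    have h2 : N z₀ ≤ N (‖z‖⁻¹ • z) := this
    rw [hN.2.2.1, abs_of_pos (inv_pos.mpr hzn)] at h2
    calc N z₀ * ‖z‖ ≤ (‖z‖⁻¹ * N z) * ‖z‖ := mul_le_mul_of_nonneg_right h2 (le_of_lt hzn)
      _ = N z := by field_simp

lemma dual_set_nonempty {p : ℕ} {N : E p → ℝ} (hN : IsNormOn N) (z : E p) :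
    ((fun v => (inner ℝ z v : ℝ)) '' {v | N v ≤ 1}).Nonempty :=
  ⟨0, ⟨0, by simp [(hN.2.1 0).mpr rfl], by simp⟩⟩

lemma dual_set_bddAbove {p : ℕ} (hp : 0 < p) {N : E p → ℝ} (hN : IsNormOn N) (z : E p) :
    BddAbove ((fun v => (inner ℝ z v : ℝ)) '' {v | N v ≤ 1}) := by
  obtain ⟨c, hc, hcN⟩ := norm_le_const_mul_N hp hN
  refine ⟨‖z‖ * c⁻¹, ?_⟩
  rintro a ⟨v, hv, rfl⟩
  have h1 : ‖v‖ ≤ c⁻¹ := by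
    have h2 := hcN v
    have h3 : N v ≤ 1 := hv
    have h4 : c * ‖v‖ ≤ 1 := h2.trans h3
    calc ‖v‖ = (c * ‖v‖) / c := by field_simp
      _ ≤ 1 / c := by gcongr
      _ = c⁻¹ := one_div c
  calc (inner ℝ z v : ℝ) ≤ ‖z‖ * ‖v‖ := real_inner_le_norm z v
    _ ≤ ‖z‖ * c⁻¹ := mul_le_mul_of_nonneg_left h1 (norm_nonneg z)

lemma dual_nonneg {p : ℕ} (hp : 0 < p) {N : E p → ℝ} (hN : IsNormOn N) (z : E p) :
    0 ≤ DualNorm N z := by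
  refine le_csSup (dual_set_bddAbove hp hN z) ⟨0, by simp [(hN.2.1 0).mpr rfl], by simp⟩

lemma inner_le_dual_mul_N {p : ℕ} (hp : 0 < p) {N : E p → ℝ} (hN : IsNormOn N)
    (z v : E p) : (inner ℝ z v : ℝ) ≤ DualNorm N z * N v := by
  rcases eq_or_ne v 0 with rfl | hv
  · simp [(hN.2.1 0).mpr rfl]
  · have hNv : 0 < N v := lt_of_le_of_ne (hN.1 v) (fun h => hv ((hN.2.1 v).mp h.symm))
    have hmem : ((N v)⁻¹ • v) ∈ {v | N v ≤ 1} := by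
      simp only [Set.mem_setOf_eq, hN.2.2.1, abs_of_pos (inv_pos.mpr hNv)]
      rw [inv_mul_cancel₀ (ne_of_gt hNv)]
    have hle : (inner ℝ z ((N v)⁻¹ • v) : ℝ) ≤ DualNorm N z :=
      le_csSup (dual_set_bddAbove hp hN z) ⟨_, hmem, rfl⟩
    rw [real_inner_smul_right] at hle
    calc (inner ℝ z v : ℝ) = ((N v)⁻¹ * inner ℝ z v) * N v := by field_simp
      _ ≤ DualNorm N z * N v := mul_le_mul_of_nonneg_right hle (le_of_lt hNv)

lemma dual_pos {p : ℕ} (hp : 0 < p) {N : E p → ℝ} (hN : IsNormOn N) {z : E p}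
    (hz : z ≠ 0) : 0 < DualNorm N z := by
  have hNz : 0 < N z := lt_of_le_of_ne (hN.1 z) (fun h => hz ((hN.2.1 z).mp h.symm))
  have hmem : ((N z)⁻¹ • z) ∈ {v | N v ≤ 1} := by
    simp only [Set.mem_setOf_eq, hN.2.2.1, abs_of_pos (inv_pos.mpr hNz)]
    rw [inv_mul_cancel₀ (ne_of_gt hNz)]
  have hle : (inner ℝ z ((N z)⁻¹ • z) : ℝ) ≤ DualNorm N z :=
    le_csSup (dual_set_bddAbove hp hN z) ⟨_, hmem, rfl⟩
  rw [real_inner_smul_right, real_inner_self_eq_norm_sq] at hle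
  have : 0 < (N z)⁻¹ * (‖z‖ * ‖z‖) := by
    have := norm_pos_iff.mpr hz
    positivity
  linarith [real_inner_self_eq_norm_mul_norm z]

lemma dual_lipschitz {p : ℕ} (hp : 0 < p) {N : E p → ℝ} (hN : IsNormOn N) :
    ∃ K : ℝ, 0 ≤ K ∧ ∀ z w : E p, DualNorm N z ≤ DualNorm N w + K * ‖z - w‖ := by
  obtain ⟨c, hc, hcN⟩ := norm_le_const_mul_N hp hN
  refine ⟨c⁻¹, le_of_lt (inv_pos.mpr hc), fun z w => ?_⟩
  apply csSup_le (dual_set_nonempty hN z)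
  rintro a ⟨v, hv, rfl⟩
  have h1 : ‖v‖ ≤ c⁻¹ := by
    have h2 := hcN v
    have h3 : N v ≤ 1 := hv
    have h4 : c * ‖v‖ ≤ 1 := h2.trans h3
    calc ‖v‖ = (c * ‖v‖) / c := by field_simp
      _ ≤ 1 / c := by gcongr
      _ = c⁻¹ := one_div c
  have h4 : (inner ℝ w v : ℝ) ≤ DualNorm N w := le_csSup (dual_set_bddAbove hp hN w) ⟨v, hv, rfl⟩
  have h5 : (inner ℝ (z - w) v : ℝ) ≤ c⁻¹ * ‖z - w‖ := by
    calc (inner ℝ (z-w) v : ℝ) ≤ ‖z - w‖ * ‖v‖ := real_inner_le_norm _ v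
      _ ≤ ‖z - w‖ * c⁻¹ := mul_le_mul_of_nonneg_left h1 (norm_nonneg _)
      _ = c⁻¹ * ‖z - w‖ := mul_comm _ _
  have : (inner ℝ z v : ℝ) = inner ℝ w v + inner ℝ (z - w) v := by
    rw [← inner_add_left]; norm_num
  linarith

lemma dual_continuous {p : ℕ} (hp : 0 < p) {N : E p → ℝ} (hN : IsNormOn N) :
    Continuous (DualNorm N) := by
  obtain ⟨K, hK0, hK⟩ := dual_lipschitz hp hN
  rw [Metric.continuous_iff]
  intro b ε hε
  refine ⟨ε / (K + 1), by positivity, fun a hab => ?_⟩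
  rw [dist_eq_norm] at hab
  have h1 := hK a b
  have h2 := hK b a
  rw [← norm_neg, neg_sub] at h2
  have hK1 : K * ‖a - b‖ ≤ (K+1) * ‖a-b‖ := by nlinarith [norm_nonneg (a-b)]
  have h3 : (K+1) * ‖a - b‖ < (K+1) * (ε / (K+1)) :=
    mul_lt_mul_of_pos_left hab (by linarith)
  rw [mul_div_cancel₀ _ (by linarith : K + 1 ≠ 0)] at h3
  rw [Real.dist_eq, abs_lt]; constructor <;> nlinarith

lemma expLoss_contDiff {p d m : ℕ} {f : E p → E d → ℝ} (x : Fin m → E d) (y : Fin m → ℝ)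
    (hf : ∀ x' : E d, ContDiff ℝ 1 fun θ => f θ x') :
    ContDiff ℝ 1 (ExpLoss f x y) := by
  unfold ExpLoss
  apply ContDiff.sum
  intro i _
  exact (((contDiff_const.mul (hf (x i))).neg).exp)

lemma expLoss_pos {p d m : ℕ} (hm : 0 < m) {f : E p → E d → ℝ} (x : Fin m → E d)
    (y : Fin m → ℝ) (θ : E p) : 0 < ExpLoss f x y θ := by
  have : (Finset.univ : Finset (Fin m)).Nonempty := by
    exact ⟨⟨0, hm⟩, Finset.mem_univ _⟩
  exact Finset.sum_pos (fun i _ => Real.exp_pos _) this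

lemma expLoss_hasDerivAt_comp {p d m : ℕ} {f : E p → E d → ℝ} {x : Fin m → E d}
    {y : Fin m → ℝ} (hf : ∀ x' : E d, ContDiff ℝ 1 fun θ => f θ x')
    {θ : ℝ → E p} {v : E p} {t : ℝ} (hθ : HasDerivAt θ v t) :
    HasDerivAt (fun s => ExpLoss f x y (θ s))
      (inner ℝ (gradient (ExpLoss f x y) (θ t)) v : ℝ) t := by
  have hdiff : DifferentiableAt ℝ (ExpLoss f x y) (θ t) :=
    ((expLoss_contDiff x y hf).differentiable one_ne_zero).differentiableAt
  have hgrad := hdiff.hasGradientAt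
  have h2 := hgrad.hasFDerivAt.comp_hasDerivAt t hθ
  exact h2

set_option maxHeartbeats 1000000 in
lemma euler_identity {p d m : ℕ} {f : E p → E d → ℝ} {x : Fin m → E d}
    {y : Fin m → ℝ} (hf : ∀ x' : E d, ContDiff ℝ 1 fun θ => f θ x')
    {L : ℝ} (hL : 0 < L)
    (hhom : ∀ c : ℝ, 0 < c → ∀ (θ : E p) (x' : E d), f (c • θ) x' = c ^ L * f θ x')
    (θ₀ : E p) :
    (inner ℝ (gradient (ExpLoss f x y) θ₀) θ₀ : ℝ) =
      -L * ∑ i, (y i * f θ₀ (x i)) * Real.exp (-(y i * f θ₀ (x i))) := by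
  have hdiff : DifferentiableAt ℝ (ExpLoss f x y) θ₀ :=
    ((expLoss_contDiff x y hf).differentiable one_ne_zero).differentiableAt
  have hcurve : HasDerivAt (fun c : ℝ => c • θ₀) θ₀ 1 := by
    simpa using (hasDerivAt_id (1:ℝ)).smul_const θ₀
  have hφ : HasDerivAt (fun c : ℝ => ExpLoss f x y (c • θ₀))
      (inner ℝ (gradient (ExpLoss f x y) θ₀) θ₀ : ℝ) 1 := by
    have hF : HasFDerivAt (ExpLoss f x y)
        ((InnerProductSpace.toDual ℝ (E p)) (gradient (ExpLoss f x y) θ₀)) ((1:ℝ) • θ₀) := by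
      rw [one_smul]
      exact hdiff.hasGradientAt.hasFDerivAt
    have h2 := hF.comp_hasDerivAt 1 hcurve
    exact h2
  have hψ : HasDerivAt (fun c : ℝ => ∑ i, Real.exp (-(y i * (c ^ L * f θ₀ (x i)))))
      (∑ i, Real.exp (-(y i * (1 * f θ₀ (x i)))) * (-(y i * (L * f θ₀ (x i))))) 1 := by
    apply HasDerivAt.fun_sum
    intro i _
    have hrpow : HasDerivAt (fun c : ℝ => c ^ L) L 1 := by
      have := Real.hasDerivAt_rpow_const (x := (1:ℝ)) (p := L) (Or.inl one_ne_zero)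
      simpa using this
    have h1 : HasDerivAt (fun c : ℝ => -(y i * (c ^ L * f θ₀ (x i))))
        (-(y i * (L * f θ₀ (x i)))) 1 := by
      exact ((hrpow.mul_const (f θ₀ (x i))).const_mul (y i)).neg
    have h2 := h1.exp
    simp only [Real.one_rpow, one_mul] at h2 ⊢
    exact h2
  have heq : (fun c : ℝ => ExpLoss f x y (c • θ₀)) =ᶠ[nhds 1]
      (fun c : ℝ => ∑ i, Real.exp (-(y i * (c ^ L * f θ₀ (x i))))) := by
    filter_upwards [Ioi_mem_nhds (by norm_num : (0:ℝ) < 1)] with c hc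
    unfold ExpLoss
    congr 1
    ext i
    rw [hhom c hc θ₀ (x i)]
  have huniq := (hψ.congr_of_eventuallyEq heq).unique hφ
  rw [← huniq]
  rw [Finset.mul_sum]
  congr 1
  ext i
  ring_nf

lemma gradient_continuous_of_contDiff {p : ℕ} {g : E p → ℝ} (hg : ContDiff ℝ 1 g) :
    Continuous (gradient g) := by
  have h1 : Continuous (fderiv ℝ g) := hg.continuous_fderiv one_ne_zero
  have h2 : Continuous ((InnerProductSpace.toDual ℝ (E p)).symm :
      (E p →L[ℝ] ℝ) → E p) := (InnerProductSpace.toDual ℝ (E p)).symm.continuous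
  exact h2.comp h1

lemma deriv_N_comp_le {p : ℕ} {N : E p → ℝ} (hN : IsNormOn N) {θ : ℝ → E p} {v : E p}
    {t : ℝ} (hθ : HasDerivAt θ v t) (hd : DifferentiableAt ℝ (fun s => N (θ s)) t) :
    deriv (fun s => N (θ s)) t ≤ N v := by
  have hsub : Set.Ioi t ⊆ {s : ℝ | s ≠ t} := fun s hs => ne_of_gt hs
  have h1 : Tendsto (slope (fun s => N (θ s)) t) (nhdsWithin t (Set.Ioi t))
      (nhds (deriv (fun s => N (θ s)) t)) :=
    (hasDerivAt_iff_tendsto_slope.mp hd.hasDerivAt).mono_left (nhdsWithin_mono _ hsub)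
  have h2 : Tendsto (fun s => N (slope θ t s)) (nhdsWithin t (Set.Ioi t)) (nhds (N v)) :=
    ((N_continuous hN).continuousAt.tendsto).comp
      ((hasDerivAt_iff_tendsto_slope.mp hθ).mono_left (nhdsWithin_mono _ hsub))
  refine le_of_tendsto_of_tendsto h1 h2 ?_
  filter_upwards [self_mem_nhdsWithin] with s hs
  have hst : 0 < s - t := sub_pos.mpr hs
  have htri : N (θ s) - N (θ t) ≤ N (θ s - θ t) := by
    have := hN.2.2.2 (θ s - θ t) (θ t)
    simp only [sub_add_cancel] at this
    linarith
  have hslope_vec : N (slope θ t s) = (s - t)⁻¹ * N (θ s - θ t) := by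
    rw [slope, vsub_eq_sub, hN.2.2.1, abs_of_pos (inv_pos.mpr hst)]
  rw [slope, hslope_vec]
  simp only [smul_eq_mul, vsub_eq_sub]
  have h3 : (s - t)⁻¹ * (N (θ s) - N (θ t)) ≤ (s - t)⁻¹ * N (θ s - θ t) :=
    mul_le_mul_of_nonneg_left htri (le_of_lt (inv_pos.mpr hst))
  calc (s - t)⁻¹ * (N (θ s) - N (θ t)) ≤ (s - t)⁻¹ * N (θ s - θ t) := h3
    _ = _ := rfl


theorem stmt_9 {p d m : ℕ} (hp : 0 < p) (hd : 0 < d) (hm : 0 < m)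
    (x : Fin m → E d) (y : Fin m → ℝ) (hy : ∀ i, y i = 1 ∨ y i = -1)
    (L : ℝ) (hL : 0 < L) (f : E p → E d → ℝ)
    (hf : ∀ x' : E d, ContDiff ℝ 1 fun θ => f θ x')
    (hhom : ∀ c : ℝ, 0 < c → ∀ (θ : E p) (x' : E d), f (c • θ) x' = c ^ L * f θ x')
    (N : E p → ℝ) (hN : IsNormOn N)
    (θ θ' : ℝ → E p) (hflow : IsSteepestFlow N (ExpLoss f x y) θ θ')
    (t0 : ℝ) (ht0 : 0 ≤ t0) (hsep : ExpLoss f x y (θ t0) < 1)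
    (hθ0 : ∀ t, t0 ≤ t → θ t ≠ 0)
    (hg0 : ∀ t, t0 ≤ t → gradient (ExpLoss f x y) (θ t) ≠ 0)
    (hNdiff : ∀ t ∈ Set.Ioi t0, DifferentiableAt ℝ (fun s => N (θ s)) t)
    (hγdiff : ∀ t ∈ Set.Ioi t0, DifferentiableAt ℝ
      (fun s => Real.log (SoftMargin N (ExpLoss f x y) L (θ s))) t)
    (t1 t2 : ℝ) (ht1 : t0 ≤ t1) (ht12 : t1 < t2)
    (hint : 0 < ∫ t in t1..t2, N (θ' t) / N (θ t)) :
    ∃ tstar ∈ Set.Ioo t1 t2,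
      1 / FlowAlignment N (ExpLoss f x y) θ tstar - 1 ≤
        (1 / L) * Real.log (SoftMargin N (ExpLoss f x y) L (θ t2) /
            SoftMargin N (ExpLoss f x y) L (θ t1)) /
          (∫ t in t1..t2, N (θ' t) / N (θ t)) := by
  classical
  have hLC1 : ContDiff ℝ 1 (ExpLoss f x y) := expLoss_contDiff x y hf
  have hLpos : ∀ s : ℝ, 0 < ExpLoss f x y (θ s) := fun s => expLoss_pos hm x y _
  have hθcont : ∀ s, 0 ≤ s → ContinuousAt θ s := fun s hs => ((hflow s hs).1).continuousAt
  have hLder : ∀ t, 0 ≤ t → HasDerivAt (fun s => ExpLoss f x y (θ s))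
      (-(DualNorm N (gradient (ExpLoss f x y) (θ t))) ^ 2) t := by
    intro t ht
    have h1 := expLoss_hasDerivAt_comp (x:=x) (y:=y) hf (hflow t ht).1
    have h2 : (inner ℝ (gradient (ExpLoss f x y) (θ t)) (θ' t) : ℝ)
        = -(DualNorm N (gradient (ExpLoss f x y) (θ t))) ^ 2 := by
      rw [real_inner_comm]; exact (hflow t ht).2.1
    rwa [h2] at h1
  have hanti : AntitoneOn (fun s => ExpLoss f x y (θ s)) (Set.Ici t0) := by
    apply antitoneOn_of_deriv_nonpos (convex_Ici t0)
    · intro s hs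
      exact ((hLder s (le_trans ht0 hs)).continuousAt).continuousWithinAt
    · intro s hs
      rw [interior_Ici] at hs
      exact (hLder s (le_trans ht0 (le_of_lt hs))).differentiableAt.differentiableWithinAt
    · intro s hs
      rw [interior_Ici] at hs
      rw [(hLder s (le_trans ht0 (le_of_lt hs))).deriv]
      exact neg_nonpos.mpr (sq_nonneg _)
  have hLlt1 : ∀ s, t0 ≤ s → ExpLoss f x y (θ s) < 1 := fun s hs =>
    lt_of_le_of_lt (hanti Set.self_mem_Ici hs hs) hsep
  have hgpos : ∀ s, t0 ≤ s → 0 < -Real.log (ExpLoss f x y (θ s)) := by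
    intro s hs
    have := Real.log_neg (hLpos s) (hLlt1 s hs)
    linarith
  have hρpos : ∀ s, t0 ≤ s → 0 < N (θ s) := fun s hs =>
    lt_of_le_of_ne (hN.1 _) (fun h => hθ0 s hs ((hN.2.1 _).mp h.symm))
  have hNspos : ∀ s, t0 ≤ s → 0 < DualNorm N (gradient (ExpLoss f x y) (θ s)) :=
    fun s hs => dual_pos hp hN (hg0 s hs)
  have hGcont : Continuous (gradient (ExpLoss f x y)) := by
    have h1 : Continuous (fderiv ℝ (ExpLoss f x y)) := hLC1.continuous_fderiv one_ne_zero
    exact (InnerProductSpace.toDual ℝ (E p)).symm.continuous.comp h1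
  have hIcontAt : ∀ s, t0 ≤ s →
      ContinuousAt (fun u => DualNorm N (gradient (ExpLoss f x y) (θ u)) / N (θ u)) s := by
    intro s hs
    have hθc := hθcont s (ht0.trans hs)
    have h1 : ContinuousAt (fun u => DualNorm N (gradient (ExpLoss f x y) (θ u))) s :=
      ((dual_continuous hp hN).comp hGcont).continuousAt.comp hθc
    have h2 : ContinuousAt (fun u => N (θ u)) s := (N_continuous hN).continuousAt.comp hθc
    exact h1.div h2 (ne_of_gt (hρpos s hs))
  have hinteq : (∫ t in t1..t2, N (θ' t) / N (θ t)) =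
      ∫ t in t1..t2, DualNorm N (gradient (ExpLoss f x y) (θ t)) / N (θ t) := by
    apply intervalIntegral.integral_congr
    intro s hs
    rw [Set.uIcc_of_le ht12.le] at hs
    dsimp only
    rw [(hflow s (ht0.trans (ht1.trans hs.1))).2.2]
  set K := ∫ t in t1..t2, DualNorm N (gradient (ExpLoss f x y) (θ t)) / N (θ t) with hKdef
  have hKpos : 0 < K := hinteq ▸ hint
  have hIcontOn : ContinuousOn (fun u => DualNorm N (gradient (ExpLoss f x y) (θ u)) / N (θ u))
      (Set.Icc t1 t2) := fun s hs => (hIcontAt s (ht1.trans hs.1)).continuousWithinAt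
  set J : ℝ → ℝ := fun u => ∫ s in t1..u,
    DualNorm N (gradient (ExpLoss f x y) (θ s)) / N (θ s) with hJdef
  have hJcont : ContinuousOn J (Set.Icc t1 t2) := by
    have h1 : MeasureTheory.IntegrableOn
        (fun u => DualNorm N (gradient (ExpLoss f x y) (θ u)) / N (θ u))
        (Set.uIcc t1 t2) MeasureTheory.volume := by
      rw [Set.uIcc_of_le ht12.le]
      exact hIcontOn.integrableOn_Icc
    have := intervalIntegral.continuousOn_primitive_interval h1
    rw [Set.uIcc_of_le ht12.le] at this
    exact this
  have hJder : ∀ s ∈ Set.Ioo t1 t2, HasDerivAt J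
      (DualNorm N (gradient (ExpLoss f x y) (θ s)) / N (θ s)) s := by
    intro s hs
    apply intervalIntegral.integral_hasDerivAt_right
    · apply ContinuousOn.intervalIntegrable
      intro u hu
      rw [Set.uIcc_of_le hs.1.le] at hu
      exact (hIcontAt u (ht1.trans hu.1)).continuousWithinAt
    · exact ContinuousAt.stronglyMeasurableAtFilter isOpen_Ioi
        (fun u hu => hIcontAt u (le_of_lt hu)) s (lt_of_le_of_lt ht1 hs.1)
    · exact hIcontAt s (ht1.trans hs.1.le)
  have hJt1 : J t1 = 0 := intervalIntegral.integral_same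
  have hsm_pos : ∀ s, t0 ≤ s → 0 < SoftMargin N (ExpLoss f x y) L (θ s) := by
    intro s hs
    exact div_pos (hgpos s hs) (Real.rpow_pos_of_pos (hρpos s hs) L)
  have hFeq : ∀ s, t0 ≤ s → Real.log (SoftMargin N (ExpLoss f x y) L (θ s)) =
      Real.log (-Real.log (ExpLoss f x y (θ s))) - L * Real.log (N (θ s)) := by
    intro s hs
    unfold SoftMargin
    rw [Real.log_div (ne_of_gt (hgpos s hs))
      (ne_of_gt (Real.rpow_pos_of_pos (hρpos s hs) L)), Real.log_rpow (hρpos s hs)]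
  set F : ℝ → ℝ := fun s => Real.log (SoftMargin N (ExpLoss f x y) L (θ s)) with hFdef
  have hFcont : ContinuousOn F (Set.Icc t1 t2) := by
    intro s hs
    apply ContinuousAt.continuousWithinAt
    have hs0 : t0 ≤ s := ht1.trans hs.1
    have hθc := hθcont s (ht0.trans hs0)
    have hLc : ContinuousAt (fun u => ExpLoss f x y (θ u)) s :=
      (hLC1.continuous.continuousAt).comp hθc
    have hgc : ContinuousAt (fun u => -Real.log (ExpLoss f x y (θ u))) s :=
      (hLc.log (ne_of_gt (hLpos s))).neg
    have hρc : ContinuousAt (fun u => N (θ u)) s := (N_continuous hN).continuousAt.comp hθc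
    have hrp : ContinuousAt (fun u => N (θ u) ^ L) s :=
      hρc.rpow_const (Or.inl (ne_of_gt (hρpos s hs0)))
    have hsm : ContinuousAt (fun u => SoftMargin N (ExpLoss f x y) L (θ u)) s := by
      unfold SoftMargin
      exact hgc.div hrp (ne_of_gt (Real.rpow_pos_of_pos (hρpos s hs0) L))
    exact hsm.log (ne_of_gt (hsm_pos s hs0))
  set F' : ℝ → ℝ := fun s => (DualNorm N (gradient (ExpLoss f x y) (θ s))) ^ 2 /
      (ExpLoss f x y (θ s) * (-Real.log (ExpLoss f x y (θ s)))) -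
      L * (deriv (fun u => N (θ u)) s / N (θ s)) with hF'def
  have hFder : ∀ s ∈ Set.Ioo t1 t2, HasDerivAt F (F' s) s := by
    intro s hs
    have hs0 : t0 < s := lt_of_le_of_lt ht1 hs.1
    have h1 := hLder s (ht0.trans hs0.le)
    have h2 : HasDerivAt (fun u => Real.log (ExpLoss f x y (θ u)))
        (-(DualNorm N (gradient (ExpLoss f x y) (θ s))) ^ 2 / ExpLoss f x y (θ s)) s :=
      h1.log (ne_of_gt (hLpos s))
    have h3 : HasDerivAt (fun u => -Real.log (ExpLoss f x y (θ u)))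
        ((DualNorm N (gradient (ExpLoss f x y) (θ s))) ^ 2 / ExpLoss f x y (θ s)) s := by
      have := h2.neg
      rw [neg_div, neg_neg] at this
      exact this
    have h4 : HasDerivAt (fun u => Real.log (-Real.log (ExpLoss f x y (θ u))))
        (((DualNorm N (gradient (ExpLoss f x y) (θ s))) ^ 2 / ExpLoss f x y (θ s)) /
          (-Real.log (ExpLoss f x y (θ s)))) s :=
      h3.log (ne_of_gt (hgpos s hs0.le))
    have h5 : HasDerivAt (fun u => N (θ u)) (deriv (fun u => N (θ u)) s) s :=
      (hNdiff s hs0).hasDerivAt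
    have h6 : HasDerivAt (fun u => Real.log (N (θ u)))
        (deriv (fun u => N (θ u)) s / N (θ s)) s := h5.log (ne_of_gt (hρpos s hs0.le))
    have h7 := h4.sub (h6.const_mul L)
    have h8 : (fun u => Real.log (-Real.log (ExpLoss f x y (θ u))) - L * Real.log (N (θ u)))
        =ᶠ[nhds s] F := by
      filter_upwards [Ioi_mem_nhds hs0] with u hu
      exact (hFeq u (le_of_lt hu)).symm
    have h9 := h7.congr_of_eventuallyEq h8.symm
    convert h9 using 1
    · rfl
    · rfl
    rw [hF'def]
    dsimp only
    rw [div_div]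
  obtain ⟨c, hc, hceq⟩ := exists_ratio_hasDerivAt_eq_ratio_slope F F' ht12 hFcont hFder
    J (fun u => DualNorm N (gradient (ExpLoss f x y) (θ u)) / N (θ u)) hJcont hJder
  refine ⟨c, hc, ?_⟩
  have hc0 : t0 ≤ c := ht1.trans hc.1.le
  have heuler := euler_identity (x:=x) (y:=y) hf hL hhom (θ c)
  have hqge : ∀ i : Fin m, -Real.log (ExpLoss f x y (θ c)) ≤ y i * f (θ c) (x i) := by
    intro i
    have h1 : Real.exp (-(y i * f (θ c) (x i))) ≤ ExpLoss f x y (θ c) :=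
      Finset.single_le_sum (f := fun j => Real.exp (-(y j * f (θ c) (x j))))
        (fun j _ => (Real.exp_pos _).le) (Finset.mem_univ i)
    have h2 := Real.log_le_log (Real.exp_pos _) h1
    rw [Real.log_exp] at h2
    linarith
  have hgcpos := hgpos c hc0
  have hLcpos := hLpos c
  have hρcpos := hρpos c hc0
  have hNcpos := hNspos c hc0
  have hSge : (-Real.log (ExpLoss f x y (θ c))) * ExpLoss f x y (θ c) ≤
      ∑ i, (y i * f (θ c) (x i)) * Real.exp (-(y i * f (θ c) (x i))) := by
    have he : (-Real.log (ExpLoss f x y (θ c))) * ExpLoss f x y (θ c)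
        = ∑ i, (-Real.log (ExpLoss f x y (θ c))) * Real.exp (-(y i * f (θ c) (x i))) := by
      rw [← Finset.mul_sum]
      rfl
    rw [he]
    exact Finset.sum_le_sum fun i _ =>
      mul_le_mul_of_nonneg_right (hqge i) (Real.exp_pos _).le
  set Sσ := ∑ i, (y i * f (θ c) (x i)) * Real.exp (-(y i * f (θ c) (x i))) with hSdef
  have hSpos : 0 < Sσ := lt_of_lt_of_le (mul_pos hgcpos hLcpos) hSge
  have hA : FlowAlignment N (ExpLoss f x y) θ c =
      (L * Sσ) / (N (θ c) * DualNorm N (gradient (ExpLoss f x y) (θ c))) := by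
    unfold FlowAlignment
    rw [real_inner_smul_left, inner_neg_right, real_inner_smul_right, real_inner_comm, heuler]
    field_simp
  have hρ'le : deriv (fun u => N (θ u)) c ≤ DualNorm N (gradient (ExpLoss f x y) (θ c)) := by
    have h1 := deriv_N_comp_le hN (hflow c (ht0.trans hc0)).1 (hNdiff c (lt_of_le_of_lt ht1 hc.1))
    rwa [(hflow c (ht0.trans hc0)).2.2] at h1
  -- simplify hceq
  rw [hJt1, sub_zero] at hceq
  have hJt2 : J t2 = K := rfl
  rw [hJt2] at hceq
  -- rewrite goal
  rw [hA, one_div_div, hinteq,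
    Real.log_div (ne_of_gt (hsm_pos t2 (ht1.trans ht12.le))) (ne_of_gt (hsm_pos t1 ht1))]
  have hΔ : Real.log (SoftMargin N (ExpLoss f x y) L (θ t2)) -
      Real.log (SoftMargin N (ExpLoss f x y) L (θ t1)) = F t2 - F t1 := rfl
  rw [hΔ]
  -- abbreviations
  have hF'c : F' c = (DualNorm N (gradient (ExpLoss f x y) (θ c))) ^ 2 /
      (ExpLoss f x y (θ c) * (-Real.log (ExpLoss f x y (θ c)))) -
      L * (deriv (fun u => N (θ u)) c / N (θ c)) := rfl
  have h1a : (DualNorm N (gradient (ExpLoss f x y) (θ c))) ^ 2 / Sσ ≤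
      (DualNorm N (gradient (ExpLoss f x y) (θ c))) ^ 2 /
        (ExpLoss f x y (θ c) * (-Real.log (ExpLoss f x y (θ c)))) := by
    gcongr
    nlinarith [hSge]
  have h1b : L * (deriv (fun u => N (θ u)) c / N (θ c)) ≤
      L * (DualNorm N (gradient (ExpLoss f x y) (θ c)) / N (θ c)) :=
    mul_le_mul_of_nonneg_left ((div_le_div_iff_of_pos_right hρcpos).mpr hρ'le) hL.le
  have h1 : (DualNorm N (gradient (ExpLoss f x y) (θ c))) ^ 2 / Sσ -
      L * (DualNorm N (gradient (ExpLoss f x y) (θ c)) / N (θ c)) ≤ F' c := by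
    rw [hF'c]
    linarith
  have h2 : F' c = (F t2 - F t1) *
      (DualNorm N (gradient (ExpLoss f x y) (θ c)) / N (θ c)) / K := by
    rw [eq_div_iff (ne_of_gt hKpos)]
    linarith [hceq]
  have hmulpos : (0:ℝ) ≤ N (θ c) / (L * DualNorm N (gradient (ExpLoss f x y) (θ c))) :=
    le_of_lt (div_pos hρcpos (mul_pos hL hNcpos))
  have h3 := mul_le_mul_of_nonneg_right (h1.trans (le_of_eq h2)) hmulpos
  have e1 : ((DualNorm N (gradient (ExpLoss f x y) (θ c))) ^ 2 / Sσ -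
      L * (DualNorm N (gradient (ExpLoss f x y) (θ c)) / N (θ c))) *
      (N (θ c) / (L * DualNorm N (gradient (ExpLoss f x y) (θ c)))) =
      N (θ c) * DualNorm N (gradient (ExpLoss f x y) (θ c)) / (L * Sσ) - 1 := by
    field_simp
  have e2 : ((F t2 - F t1) * (DualNorm N (gradient (ExpLoss f x y) (θ c)) / N (θ c)) / K) *
      (N (θ c) / (L * DualNorm N (gradient (ExpLoss f x y) (θ c)))) =
      1 / L * (F t2 - F t1) / K := by
    field_simp
  rw [e1, e2] at h3
  exact h3
end
end

section
/- Let Φ : ℝ → ℝ be a continuously differentiable bijection with Φ'(u) > 0 for all u ∈ ℝ and such that u ↦ u·Φ'(u) is nondecreasing on [0, ∞). Let θ be a steepest-flow trajectory for 𝓛_Φ with respect to N, and let t0 ≥ 0 satisfy 𝓛_Φ(θ(t0)) < exp(−Φ(0)). Let t > t0 be such that θ(t) ≠ 0, ∇𝓛_Φ(θ(t)) ≠ 0, the function s ↦ N(θ(s)) is differentiable at t, and the function s ↦ log γ̃_Φ(θ(s)) is differentiable at t. Then (d/dt) log γ̃_Φ(θ(t)) ≥ L · N(θ'(t))² · ( (Φ^{−1})'(log(1/𝓛_Φ(θ(t))))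 / (L · 𝓛_Φ(θ(t)) · Φ^{−1}(log(1/𝓛_Φ(θ(t))))) − 1/(N(θ(t)) · N(θ'(t))) ) ≥ 0. -/
open Filter

noncomputable section

/-- The Φ-loss `𝓛_Φ(θ) = Σ_i exp (-Φ (y_i f(θ, x_i)))`. -/
def PhiLoss {p d m : ℕ} (Φ : ℝ → ℝ) (f : E p → E d → ℝ) (x : Fin m → E d)
    (y : Fin m → ℝ) (θ : E p) : ℝ :=
  ∑ i, Real.exp (-Φ (y i * f θ (x i)))

/-- The Φ-soft margin `γ̃_Φ(θ) = Φ⁻¹(log (1/𝓛_Φ(θ))) / N(θ)^L`. -/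
def PhiSoftMargin {p : ℕ} (N : E p → ℝ) (Φ : ℝ → ℝ) (𝓛 : E p → ℝ) (L : ℝ)
    (θ : E p) : ℝ :=
  Function.invFun Φ (Real.log (1 / 𝓛 θ)) / N θ ^ L

section AuxLemmas
open Function Real

variable {p : ℕ} {N : E p → ℝ}

lemma IsNormOn.zero (hN : IsNormOn N) : N 0 = 0 := (hN.2.1 0).mpr rfl

lemma IsNormOn.pos (hN : IsNormOn N) {θ : E p} (h : θ ≠ 0) : 0 < N θ :=
  (hN.1 θ).lt_of_ne fun h0 => h ((hN.2.1 θ).mp h0.symm)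

lemma euclid_decomp (v : E p) : v = ∑ i, v i • EuclideanSpace.single i (1:ℝ) := by
  ext j
  rw [WithLp.ofLp_sum, Finset.sum_apply]
  simp [EuclideanSpace.single_apply]

lemma IsNormOn.sum_le (hN : IsNormOn N) {ι : Type*} (s : Finset ι) (g : ι → E p) :
    N (∑ i ∈ s, g i) ≤ ∑ i ∈ s, N (g i) := by
  classical
  induction s using Finset.cons_induction with
  | empty => simp [hN.zero]
  | cons a s ha ih =>
    rw [Finset.sum_cons, Finset.sum_cons]
    exact (hN.2.2.2 _ _).trans (by linarith)

lemma abs_coord_le (v : E p) (i : Fin p) : |v i| ≤ ‖v‖ := by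
  have h := abs_real_inner_le_norm (EuclideanSpace.single i (1:ℝ)) v
  rw [EuclideanSpace.inner_single_left] at h
  simpa using h

lemma IsNormOn.le_const_mul (hN : IsNormOn N) : ∃ C : ℝ, 0 ≤ C ∧ ∀ v, N v ≤ C * ‖v‖ := by
  refine ⟨∑ i, N (EuclideanSpace.single i (1:ℝ)), Finset.sum_nonneg fun i _ => hN.1 _, fun v => ?_⟩
  calc N v = N (∑ i, v i • EuclideanSpace.single i (1:ℝ)) := by rw [← euclid_decomp]
    _ ≤ ∑ i, N (v i • EuclideanSpace.single i (1:ℝ)) := hN.sum_le _ _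
    _ = ∑ i, |v i| * N (EuclideanSpace.single i (1:ℝ)) := by simp [hN.2.2.1]
    _ ≤ ∑ i, ‖v‖ * N (EuclideanSpace.single i (1:ℝ)) := by
        refine Finset.sum_le_sum fun i _ => mul_le_mul_of_nonneg_right (abs_coord_le v i) (hN.1 _)
    _ = (∑ i, N (EuclideanSpace.single i (1:ℝ))) * ‖v‖ := by rw [Finset.sum_mul]; exact Finset.sum_congr rfl fun i _ => mul_comm _ _

lemma IsNormOn.continuous (hN : IsNormOn N) : Continuous N := by
  obtain ⟨C, hC0, hC⟩ := hN.le_const_mul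
  refine (LipschitzWith.of_dist_le_mul (K := ⟨C, hC0⟩) fun a b => ?_).continuous
  have h1 : N a - N b ≤ N (a - b) := by
    have := hN.2.2.2 (a - b) b; simpa using this
  have h2 : N b - N a ≤ N (a - b) := by
    have h3 := hN.2.2.2 (b - a) a
    have hn : N (b - a) = N (a - b) := by
      have h4 := hN.2.2.1 (-1) (a - b)
      simp only [neg_one_smul, abs_neg, abs_one, one_mul] at h4
      rw [← h4, neg_sub]
    rw [hn] at h3; simpa using h3
  have : |N a - N b| ≤ N (a - b) := abs_sub_le_iff.mpr ⟨h1, h2⟩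
  calc dist (N a) (N b) = |N a - N b| := Real.dist_eq _ _
    _ ≤ N (a - b) := this
    _ ≤ C * ‖a - b‖ := hC _
    _ = ↑(⟨C, hC0⟩ : NNReal) * dist a b := by rw [dist_eq_norm]

lemma IsNormOn.exists_lower (hN : IsNormOn N) (hp : 0 < p) :
    ∃ c : ℝ, 0 < c ∧ ∀ v, c * ‖v‖ ≤ N v := by
  haveI : Nontrivial (E p) := ⟨EuclideanSpace.single ⟨0, hp⟩ (1:ℝ), 0, by
    intro h
    have := congrArg (fun w : E p => w ⟨0, hp⟩) h
    simp [EuclideanSpace.single_apply] at this⟩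
  have hsph : (Metric.sphere (0 : E p) 1).Nonempty := NormedSpace.sphere_nonempty.mpr zero_le_one
  obtain ⟨v₀, hv₀, hmin⟩ := (isCompact_sphere (0 : E p) 1).exists_isMinOn hsph
    hN.continuous.continuousOn
  have hv₀n : ‖v₀‖ = 1 := by simpa using hv₀
  have hc : 0 < N v₀ := hN.pos (by intro h; rw [h] at hv₀n; simp at hv₀n)
  refine ⟨N v₀, hc, fun v => ?_⟩
  rcases eq_or_ne v 0 with rfl | hv
  · simp [hN.zero]
  · have hnv : (0:ℝ) < ‖v‖ := norm_pos_iff.mpr hv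
    have hmem : ‖v‖⁻¹ • v ∈ Metric.sphere (0 : E p) 1 := by
      simp [norm_smul, abs_of_pos (inv_pos.mpr hnv), inv_mul_cancel₀ hnv.ne']
    have := hmin hmem
    have h2 : N v₀ ≤ ‖v‖⁻¹ * N v := by
      have := hN.2.2.1 ‖v‖⁻¹ v
      rw [abs_of_pos (inv_pos.mpr hnv)] at this
      simpa [this] using hmin hmem
    calc N v₀ * ‖v‖ ≤ (‖v‖⁻¹ * N v) * ‖v‖ := by nlinarith
      _ = N v := by field_simp

lemma IsNormOn.dual_bddAbove (hN : IsNormOn N) (hp : 0 < p) (z : E p) :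
    BddAbove ((fun v => (inner ℝ z v : ℝ)) '' {v | N v ≤ 1}) := by
  obtain ⟨c, hc, hlow⟩ := hN.exists_lower hp
  refine ⟨‖z‖ * c⁻¹, fun w hw => ?_⟩
  obtain ⟨v, hv, rfl⟩ := hw
  have h1 : (inner ℝ z v : ℝ) ≤ ‖z‖ * ‖v‖ := real_inner_le_norm z v
  have h2 : ‖v‖ ≤ c⁻¹ := by
    have := hlow v
    rw [← le_div_iff₀' hc] at this
    calc ‖v‖ ≤ N v / c := this
      _ ≤ 1 / c := by gcongr; exact hv
      _ = c⁻¹ := one_div c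
  calc (inner ℝ z v : ℝ) ≤ ‖z‖ * ‖v‖ := h1
    _ ≤ ‖z‖ * c⁻¹ := mul_le_mul_of_nonneg_left h2 (norm_nonneg z)

lemma IsNormOn.dualnorm_nonneg (hN : IsNormOn N) (hp : 0 < p) (z : E p) :
    0 ≤ DualNorm N z := by
  have h0 : (0:ℝ) ∈ (fun v => (inner ℝ z v : ℝ)) '' {v | N v ≤ 1} :=
    ⟨0, by simp [hN.zero], by simp⟩
  exact le_csSup (hN.dual_bddAbove hp z) h0

lemma IsNormOn.inner_le_dual (hN : IsNormOn N) (hp : 0 < p) (z v : E p) :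
    (inner ℝ z v : ℝ) ≤ DualNorm N z * N v := by
  rcases eq_or_ne v 0 with rfl | hv
  · simp [hN.zero, mul_nonneg (hN.dualnorm_nonneg hp z)]
  · have hNv : 0 < N v := hN.pos hv
    have hmem : ((N v)⁻¹ • v) ∈ {v | N v ≤ 1} := by
      have := hN.2.2.1 (N v)⁻¹ v
      simp only [Set.mem_setOf_eq, this, abs_of_pos (inv_pos.mpr hNv)]
      rw [inv_mul_cancel₀ hNv.ne']
    have hle : (inner ℝ z ((N v)⁻¹ • v) : ℝ) ≤ DualNorm N z :=
      le_csSup (hN.dual_bddAbove hp z) ⟨_, hmem, rfl⟩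
    rw [real_inner_smul_right] at hle
    have h5 := mul_le_mul_of_nonneg_right hle hNv.le
    calc (inner ℝ z v : ℝ) = (N v)⁻¹ * (inner ℝ z v : ℝ) * N v := by field_simp
      _ ≤ DualNorm N z * N v := h5

end AuxLemmas

theorem stmt_14 {p d m : ℕ} (hp : 0 < p) (hd : 0 < d) (hm : 0 < m)
    (x : Fin m → E d) (y : Fin m → ℝ) (hy : ∀ i, y i = 1 ∨ y i = -1)
    (L : ℝ) (hL : 0 < L) (f : E p → E d → ℝ)
    (hf : ∀ x' : E d, ContDiff ℝ 1 fun θ => f θ x')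
    (hhom : ∀ c : ℝ, 0 < c → ∀ (θ : E p) (x' : E d), f (c • θ) x' = c ^ L * f θ x')
    (N : E p → ℝ) (hN : IsNormOn N)
    (Φ : ℝ → ℝ) (hΦC1 : ContDiff ℝ 1 Φ) (hΦbij : Function.Bijective Φ)
    (hΦ' : ∀ u : ℝ, 0 < deriv Φ u)
    (hΦmono : MonotoneOn (fun u => u * deriv Φ u) (Set.Ici (0:ℝ)))
    (θ θ' : ℝ → E p) (hflow : IsSteepestFlow N (PhiLoss Φ f x y) θ θ')
    (t0 : ℝ) (ht0 : 0 ≤ t0) (hsep : PhiLoss Φ f x y (θ t0) < Real.exp (-Φ 0))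
    (t : ℝ) (ht : t0 < t) (hθ0 : θ t ≠ 0)
    (hg0 : gradient (PhiLoss Φ f x y) (θ t) ≠ 0)
    (hNdiff : DifferentiableAt ℝ (fun s => N (θ s)) t)
    (hγdiff : DifferentiableAt ℝ
      (fun s => Real.log (PhiSoftMargin N Φ (PhiLoss Φ f x y) L (θ s))) t) :
    deriv (fun s => Real.log (PhiSoftMargin N Φ (PhiLoss Φ f x y) L (θ s))) t ≥
      L * (N (θ' t)) ^ 2 *
        (deriv (Function.invFun Φ) (Real.log (1 / PhiLoss Φ f x y (θ t))) /
            (L * PhiLoss Φ f x y (θ t) *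
              Function.invFun Φ (Real.log (1 / PhiLoss Φ f x y (θ t)))) -
          1 / (N (θ t) * N (θ' t))) ∧
    L * (N (θ' t)) ^ 2 *
        (deriv (Function.invFun Φ) (Real.log (1 / PhiLoss Φ f x y (θ t))) /
            (L * PhiLoss Φ f x y (θ t) *
              Function.invFun Φ (Real.log (1 / PhiLoss Φ f x y (θ t)))) -
          1 / (N (θ t) * N (θ' t))) ≥ 0 := by
  have ht0t : (0:ℝ) < t := lt_of_le_of_lt ht0 ht
  set 𝓛 := PhiLoss Φ f x y with h𝓛def
  -- basic differentiability
  have hfd : ∀ x', Differentiable ℝ (fun ϑ => f ϑ x') := fun x' => (hf x').differentiable one_ne_zero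
  have hΦd : Differentiable ℝ Φ := hΦC1.differentiable one_ne_zero
  have hD𝓛 : Differentiable ℝ 𝓛 := by
    have : Differentiable ℝ (fun ϑ : E p => ∑ i, Real.exp (-Φ (y i * f ϑ (x i)))) := by
      apply Differentiable.fun_sum
      intro i _
      exact Real.differentiable_exp.comp ((hΦd.comp ((hfd (x i)).const_mul (y i))).neg)
    exact this
  have hℓpos : ∀ ϑ, 0 < 𝓛 ϑ := by
    intro ϑ
    haveI : Nonempty (Fin m) := ⟨⟨0, hm⟩⟩
    exact Finset.sum_pos (fun i _ => Real.exp_pos _) Finset.univ_nonempty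
  -- derivative of loss along flow
  have hℓθ : ∀ s, 0 ≤ s →
      HasDerivAt (fun r => 𝓛 (θ r)) (-(DualNorm N (gradient 𝓛 (θ s))) ^ 2) s := by
    intro s hs
    obtain ⟨hθs, hinner, _⟩ := hflow s hs
    have hg := (hD𝓛 (θ s)).hasGradientAt
    have hcomp := hg.hasFDerivAt.comp_hasDerivAt s hθs
    have : HasDerivAt (fun r => 𝓛 (θ r)) ((inner ℝ (gradient 𝓛 (θ s)) (θ' s) : ℝ)) s := by
      rw [← InnerProductSpace.toDual_apply_apply]; exact hcomp
    rwa [real_inner_comm, hinner] at this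
  -- loss is decreasing
  have hanti : 𝓛 (θ t) ≤ 𝓛 (θ t0) := by
    have h := antitoneOn_of_deriv_nonpos (convex_Icc t0 t) (f := fun r => 𝓛 (θ r))
      (fun s hs => (hℓθ s (ht0.trans hs.1)).continuousAt.continuousWithinAt)
      (fun s hs => by
        rw [interior_Icc] at hs
        exact (hℓθ s (ht0.trans hs.1.le)).differentiableAt.differentiableWithinAt)
      (fun s hs => by
        rw [interior_Icc] at hs
        rw [(hℓθ s (ht0.trans hs.1.le)).deriv]
        exact neg_nonpos.mpr (sq_nonneg _))
    exact h (Set.left_mem_Icc.mpr ht.le) (Set.right_mem_Icc.mpr ht.le) ht.le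
  have hlt : 𝓛 (θ t) < Real.exp (-Φ 0) := lt_of_le_of_lt hanti hsep
  -- Φ facts
  have hΦmonoS : StrictMono Φ := strictMono_of_deriv_pos hΦ'
  have hΦinv_right : ∀ b, Φ (Function.invFun Φ b) = b :=
    fun b => Function.invFun_eq (hΦbij.surjective b)
  have hinv_pos : ∀ r : ℝ, 0 < r → r < Real.exp (-Φ 0) →
      0 < Function.invFun Φ (Real.log (1 / r)) := by
    intro r hr hrlt
    have hb : Φ 0 < Real.log (1 / r) := by
      rw [one_div, Real.log_inv]
      have h1 := Real.log_lt_log hr hrlt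
      rw [Real.log_exp] at h1
      linarith
    by_contra h
    push_neg at h
    have h2 := hΦmonoS.monotone h
    rw [hΦinv_right] at h2
    linarith
  set a := Real.log (1 / 𝓛 (θ t)) with ha
  set G := Function.invFun Φ a with hGdef
  have hΦG : Φ G = a := hΦinv_right a
  have hGpos : 0 < G := hinv_pos _ (hℓpos _) hlt
  -- continuity and derivative of invFun Φ
  have hinv_cont : Continuous (Function.invFun Φ) := by
    obtain ⟨iso, hiso⟩ : ∃ iso : ℝ ≃o ℝ, ⇑iso = Φ :=
      ⟨StrictMono.orderIsoOfSurjective Φ hΦmonoS hΦbij.surjective,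
        StrictMono.coe_orderIsoOfSurjective Φ hΦmonoS hΦbij.surjective⟩
    have heq : Function.invFun Φ = ⇑iso.symm := by
      funext b
      apply hΦbij.injective
      rw [hΦinv_right b]
      exact ((congrFun hiso (iso.symm b)).symm.trans (iso.apply_symm_apply b)).symm
    rw [heq]
    exact OrderIso.continuous _
  have hinv_deriv : HasDerivAt (Function.invFun Φ) (deriv Φ G)⁻¹ a := by
    refine HasDerivAt.of_local_left_inverse hinv_cont.continuousAt
      ((hΦd G).hasDerivAt) (hΦ' G).ne' ?_
    exact Filter.Eventually.of_forall hΦinv_right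
  have hdinv_eq : deriv (Function.invFun Φ) a = (deriv Φ G)⁻¹ := hinv_deriv.deriv
  -- Euler identity computation
  set u : Fin m → ℝ := fun i => y i * f (θ t) (x i) with hu
  set grad := gradient 𝓛 (θ t) with hgrad
  set S := ∑ i, u i * deriv Φ (u i) * Real.exp (-Φ (u i)) with hS
  have h𝓛sum : 𝓛 (θ t) = ∑ i, Real.exp (-Φ (u i)) := rfl
  have hφc : HasDerivAt (fun c : ℝ => 𝓛 (c • θ t)) ((inner ℝ grad (θ t) : ℝ)) 1 := by
    have hsm : HasDerivAt (fun c : ℝ => c • θ t) (θ t) 1 := by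
      simpa using (hasDerivAt_id (1 : ℝ)).smul_const (θ t)
    have hg := (hD𝓛 (θ t)).hasGradientAt
    have hfd' : HasFDerivAt 𝓛 (InnerProductSpace.toDual ℝ _ grad) ((fun c : ℝ => c • θ t) 1) := by
      simpa only [one_smul] using hg.hasFDerivAt
    have hcomp := hfd'.comp_hasDerivAt 1 hsm
    simpa [Function.comp_def, InnerProductSpace.toDual_apply_apply] using hcomp
  have hψ : HasDerivAt (fun c : ℝ => ∑ i, Real.exp (-Φ (c ^ L * u i))) (-(L * S)) 1 := by
    have hterm : ∀ i : Fin m, HasDerivAt (fun c : ℝ => Real.exp (-Φ (c ^ L * u i)))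
        (Real.exp (-Φ ((1:ℝ) ^ L * u i)) * -(deriv Φ ((1:ℝ) ^ L * u i) * (L * u i))) 1 := by
      intro i
      have h1 : HasDerivAt (fun c : ℝ => c ^ L * u i) (L * u i) 1 := by
        have := (Real.hasDerivAt_rpow_const (x := (1:ℝ)) (p := L) (Or.inl one_ne_zero)).mul_const (u i)
        simpa using this
      have h2 : HasDerivAt Φ (deriv Φ ((1:ℝ) ^ L * u i)) ((1:ℝ) ^ L * u i) := (hΦd _).hasDerivAt
      have h3 := ((h2.comp (1:ℝ) h1).neg).exp
      simpa [Function.comp] using h3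
    have hsum : HasDerivAt (fun c : ℝ => ∑ i, Real.exp (-Φ (c ^ L * u i)))
        (∑ i, Real.exp (-Φ ((1:ℝ) ^ L * u i)) * -(deriv Φ ((1:ℝ) ^ L * u i) * (L * u i))) 1 :=
      HasDerivAt.fun_sum (fun i _ => hterm i)
    have heq : ∑ i : Fin m, Real.exp (-Φ ((1:ℝ) ^ L * u i)) * -(deriv Φ ((1:ℝ) ^ L * u i) * (L * u i))
        = -(L * S) := by
      rw [hS, Finset.mul_sum, ← Finset.sum_neg_distrib]
      refine Finset.sum_congr rfl fun i _ => ?_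
      rw [Real.one_rpow, one_mul]
      ring
    rwa [heq] at hsum
  have h𝓛c : ∀ c : ℝ, 0 < c → 𝓛 (c • θ t) = ∑ i, Real.exp (-Φ (c ^ L * u i)) := by
    intro c hc
    rw [h𝓛def]
    refine Finset.sum_congr rfl fun i _ => ?_
    rw [hhom c hc (θ t) (x i), show y i * (c ^ L * f (θ t) (x i)) = c ^ L * u i from by rw [hu]; ring]
  have hEqc : (fun c : ℝ => 𝓛 (c • θ t)) =ᶠ[nhds 1] (fun c => ∑ i, Real.exp (-Φ (c ^ L * u i))) :=
    Filter.eventuallyEq_of_mem (Ioi_mem_nhds one_pos) (fun c hc => h𝓛c c hc)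
  have hinner_eq : (inner ℝ grad (θ t) : ℝ) = -(L * S) :=
    hφc.unique (hψ.congr_of_eventuallyEq hEqc)
  -- dual norm bound
  have hflowt := hflow t ht0t.le
  have hNt'_eq : N (θ' t) = DualNorm N grad := hflowt.2.2
  have hntpos : 0 < N (θ t) := hN.pos hθ0
  have hLS : L * S ≤ N (θ t) * N (θ' t) := by
    have hdual := hN.inner_le_dual hp grad (-θ t)
    have hneg : N (-θ t) = N (θ t) := by
      have h1 := hN.2.2.1 (-1) (θ t)
      simpa using h1
    have hval : (inner ℝ grad (-θ t) : ℝ) = L * S := by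
      rw [inner_neg_right, hinner_eq]; ring
    rw [hneg, hval, ← hNt'_eq] at hdual
    linarith [hdual, mul_comm (N (θ' t)) (N (θ t))]
  -- lower bound on S
  have hui_ge : ∀ i, G ≤ u i := by
    intro i
    have hterm : Real.exp (-Φ (u i)) ≤ 𝓛 (θ t) := by
      rw [h𝓛sum]
      exact Finset.single_le_sum (f := fun j => Real.exp (-Φ (u j)))
        (fun j _ => (Real.exp_pos _).le) (Finset.mem_univ i)
    have hle : a ≤ Φ (u i) := by
      rw [ha, one_div, Real.log_inv]
      have h1 := Real.log_le_log (Real.exp_pos _) hterm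
      rw [Real.log_exp] at h1
      linarith
    exact hΦmonoS.le_iff_le.mp (by rw [hΦG]; exact hle)
  have hS_ge : G * deriv Φ G * 𝓛 (θ t) ≤ S := by
    have hterm : ∀ i, G * deriv Φ G * Real.exp (-Φ (u i)) ≤ u i * deriv Φ (u i) * Real.exp (-Φ (u i)) := by
      intro i
      have h1 : G * deriv Φ G ≤ u i * deriv Φ (u i) :=
        hΦmono (Set.mem_Ici.mpr hGpos.le) (Set.mem_Ici.mpr (hGpos.le.trans (hui_ge i))) (hui_ge i)
      exact mul_le_mul_of_nonneg_right h1 (Real.exp_pos _).le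
    calc G * deriv Φ G * 𝓛 (θ t) = ∑ i, G * deriv Φ G * Real.exp (-Φ (u i)) := by
          rw [h𝓛sum, Finset.mul_sum]
      _ ≤ S := Finset.sum_le_sum fun i _ => hterm i
  have hpos_chain : 0 < L * (G * deriv Φ G * 𝓛 (θ t)) :=
    mul_pos hL (mul_pos (mul_pos hGpos (hΦ' G)) (hℓpos _))
  have hchain : L * (G * deriv Φ G * 𝓛 (θ t)) ≤ N (θ t) * N (θ' t) :=
    le_trans (mul_le_mul_of_nonneg_left hS_ge hL.le) hLS
  have hNt'pos : 0 < N (θ' t) := by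
    nlinarith [hpos_chain.trans_le hchain, hntpos, hN.1 (θ' t)]
  -- bracket nonnegativity
  have hBnn : 0 ≤ deriv (Function.invFun Φ) a / (L * 𝓛 (θ t) * G) - 1 / (N (θ t) * N (θ' t)) := by
    rw [hdinv_eq]
    have h1 : 1 / (N (θ t) * N (θ' t)) ≤ 1 / (L * (G * deriv Φ G * 𝓛 (θ t))) :=
      one_div_le_one_div_of_le hpos_chain hchain
    have h2 : (deriv Φ G)⁻¹ / (L * 𝓛 (θ t) * G) = 1 / (L * (G * deriv Φ G * 𝓛 (θ t))) := by
      rw [div_eq_mul_inv, one_div, ← mul_inv]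
      congr 1
      ring
    rw [h2]
    linarith
  have hsecond : L * (N (θ' t)) ^ 2 *
      (deriv (Function.invFun Φ) a / (L * 𝓛 (θ t) * G) - 1 / (N (θ t) * N (θ' t))) ≥ 0 :=
    mul_nonneg (mul_nonneg hL.le (sq_nonneg _)) hBnn
  -- derivative computations
  have hDer𝓛 : HasDerivAt (fun r => 𝓛 (θ r)) (-(N (θ' t)) ^ 2) t := by
    rw [hNt'_eq]
    exact hℓθ t ht0t.le
  have hA : HasDerivAt (fun s => Real.log (1 / 𝓛 (θ s))) ((N (θ' t)) ^ 2 / 𝓛 (θ t)) t := by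
    have h1 := (hDer𝓛.log (hℓpos (θ t)).ne').neg
    have h2 : (fun s => Real.log (1 / 𝓛 (θ s))) = fun s => -Real.log (𝓛 (θ s)) := by
      funext s
      rw [one_div, Real.log_inv]
    rw [h2]
    rw [show (N (θ' t)) ^ 2 / 𝓛 (θ t) = -(-N (θ' t) ^ 2 / 𝓛 (θ t)) by ring]
    exact h1
  have hgder : HasDerivAt (fun s => Function.invFun Φ (Real.log (1 / 𝓛 (θ s))))
      ((deriv Φ G)⁻¹ * ((N (θ' t)) ^ 2 / 𝓛 (θ t))) t := by
    have := hinv_deriv.comp t hA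
    simpa [Function.comp_def] using this
  have hlogg : HasDerivAt (fun s => Real.log (Function.invFun Φ (Real.log (1 / 𝓛 (θ s)))))
      ((deriv Φ G)⁻¹ * ((N (θ' t)) ^ 2 / 𝓛 (θ t)) / G) t :=
    hgder.log hGpos.ne'
  have hlogn : HasDerivAt (fun s => Real.log (N (θ s)))
      (deriv (fun s => N (θ s)) t / N (θ t)) t :=
    hNdiff.hasDerivAt.log hntpos.ne'
  have hF : HasDerivAt
      (fun s => Real.log (Function.invFun Φ (Real.log (1 / 𝓛 (θ s)))) - L * Real.log (N (θ s)))
      ((deriv Φ G)⁻¹ * ((N (θ' t)) ^ 2 / 𝓛 (θ t)) / G - L * (deriv (fun s => N (θ s)) t / N (θ t))) t :=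
    hlogg.sub (hlogn.const_mul L)
  -- eventual equality
  have hθcont : ContinuousOn θ (Set.Ioi 0) :=
    fun s hs => ((hflow s (le_of_lt hs)).1.continuousAt).continuousWithinAt
  have hU : ∀ᶠ s in nhds t, 0 < s ∧ 𝓛 (θ s) < Real.exp (-Φ 0) ∧ θ s ≠ 0 := by
    have hopen1 : IsOpen (Set.Ioi (0:ℝ) ∩ (fun s => 𝓛 (θ s)) ⁻¹' Set.Iio (Real.exp (-Φ 0))) :=
      ContinuousOn.isOpen_inter_preimage (hD𝓛.continuous.comp_continuousOn hθcont)
        isOpen_Ioi isOpen_Iio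
    have hopen2 : IsOpen (Set.Ioi (0:ℝ) ∩ θ ⁻¹' {(0 : E p)}ᶜ) :=
      ContinuousOn.isOpen_inter_preimage hθcont isOpen_Ioi isOpen_compl_singleton
    filter_upwards [hopen1.mem_nhds ⟨ht0t, hlt⟩, hopen2.mem_nhds ⟨ht0t, hθ0⟩] with s h1 h2
    exact ⟨h1.1, h1.2, h2.2⟩
  have hEqF : (fun s => Real.log (PhiSoftMargin N Φ 𝓛 L (θ s))) =ᶠ[nhds t]
      (fun s => Real.log (Function.invFun Φ (Real.log (1 / 𝓛 (θ s)))) - L * Real.log (N (θ s))) := by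
    filter_upwards [hU] with s hs
    obtain ⟨hs0, hslt, hsne⟩ := hs
    have hns : 0 < N (θ s) := hN.pos hsne
    have hgs : 0 < Function.invFun Φ (Real.log (1 / 𝓛 (θ s))) := hinv_pos _ (hℓpos _) hslt
    show Real.log (PhiSoftMargin N Φ 𝓛 L (θ s)) = _
    rw [PhiSoftMargin, Real.log_div hgs.ne' (Real.rpow_pos_of_pos hns L).ne',
      Real.log_rpow hns]
  -- n' ≤ N (θ' t)
  have hn'le : deriv (fun s => N (θ s)) t ≤ N (θ' t) := by
    have hsub : Set.Ioi t ⊆ ({t} : Set ℝ)ᶜ := by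
      intro s hs
      simp only [Set.mem_compl_iff, Set.mem_singleton_iff]
      exact ne_of_gt hs
    have hslope_n : Tendsto (slope (fun s => N (θ s)) t) (nhdsWithin t (Set.Ioi t))
        (nhds (deriv (fun s => N (θ s)) t)) :=
      (hasDerivAt_iff_tendsto_slope.mp hNdiff.hasDerivAt).mono_left (nhdsWithin_mono t hsub)
    have hslope_θ : Tendsto (fun s => N (slope θ t s)) (nhdsWithin t (Set.Ioi t))
        (nhds (N (θ' t))) :=
      (hN.continuous.tendsto (θ' t)).comp
        ((hasDerivAt_iff_tendsto_slope.mp (hflow t ht0t.le).1).mono_left (nhdsWithin_mono t hsub))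
    refine le_of_tendsto_of_tendsto hslope_n hslope_θ ?_
    filter_upwards [self_mem_nhdsWithin] with s hs
    have hst : 0 < s - t := sub_pos.mpr hs
    have hsub2 : N (θ s) - N (θ t) ≤ N (θ s - θ t) := by
      have h1 := hN.2.2.2 (θ s - θ t) (θ t)
      simpa using h1
    have hslope_eq : N (θ s - θ t) = (s - t) * N (slope θ t s) := by
      rw [slope_def_module, hN.2.2.1, abs_of_pos (inv_pos.mpr hst), ← mul_assoc,
        mul_inv_cancel₀ hst.ne', one_mul]
    calc slope (fun s => N (θ s)) t s = (N (θ s) - N (θ t)) / (s - t) := slope_def_field _ _ _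
      _ ≤ N (θ s - θ t) / (s - t) := by gcongr
      _ = N (slope θ t s) := by rw [hslope_eq]; exact mul_div_cancel_left₀ _ hst.ne'
  -- conclude
  have hderiv_eq : deriv (fun s => Real.log (PhiSoftMargin N Φ 𝓛 L (θ s))) t =
      (deriv Φ G)⁻¹ * ((N (θ' t)) ^ 2 / 𝓛 (θ t)) / G - L * (deriv (fun s => N (θ s)) t / N (θ t)) := by
    rw [hEqF.deriv_eq, hF.deriv]
  have hLne : L ≠ 0 := hL.ne'
  have h𝓛ne : 𝓛 (θ t) ≠ 0 := (hℓpos _).ne'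
  have hGne : G ≠ 0 := hGpos.ne'
  have hΦ'ne : deriv Φ G ≠ 0 := (hΦ' G).ne'
  have hNt'ne : N (θ' t) ≠ 0 := hNt'pos.ne'
  have hntne : N (θ t) ≠ 0 := hntpos.ne'
  constructor
  · rw [hderiv_eq, hdinv_eq]
    have h1 : (deriv Φ G)⁻¹ * ((N (θ' t)) ^ 2 / 𝓛 (θ t)) / G
        = L * (N (θ' t)) ^ 2 * ((deriv Φ G)⁻¹ / (L * 𝓛 (θ t) * G)) := by
      field_simp
    have h2 : L * (N (θ' t)) ^ 2 * (1 / (N (θ t) * N (θ' t))) = L * (N (θ' t) / N (θ t)) := by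
      field_simp
    have h3 : L * (deriv (fun s => N (θ s)) t / N (θ t)) ≤ L * (N (θ' t) / N (θ t)) := by
      gcongr
    rw [mul_sub, h1, h2]
    linarith
  · rw [hdinv_eq] at hsecond ⊢
    exact hsecond
end
end
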